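/- For integers k > 2j ≥ 0, the sum over i from 0 to j of (-1)^i * (k - 2i)/(k - j - i) * C(k - j - i, j - i) equals C(k - j, j). -/

import Mathlib

open Finset

/-- For integers `k > 2j ≥ 0`,
`∑_{i=0}^{j} (-1)^i * (k - 2i)/(k - j - i) * C(k - j - i, j - i) = C(k - j, j)`. -/
theorem stmt1 (k j : ℕ) (h : 2 * j < k) :
    ∑ i ∈ Finset.range (j + 1),
        (-1 : ℚ) ^ i * (((k : ℚ) - 2 * i) / ((k : ℚ) - j - i)) *
          (Nat.choose (k - j - i) (j - i) : ℚ)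
      = (Nat.choose (k - j) j : ℚ) := by
  set g : ℕ → ℚ := fun i => if i ≤ j then (-1:ℚ)^i * (Nat.choose (k-j-i) (j-i) : ℚ) else 0
    with hg
  have hgoal : (Nat.choose (k - j) j : ℚ) = g 0 - g (j+1) := by
    simp [hg]
  rw [hgoal, ← Finset.sum_range_sub' g (j+1)]
  apply Finset.sum_congr rfl
  intro i hi
  simp only [Finset.mem_range, Nat.lt_succ_iff] at hi
  have hki : j + i < k := by omega
  have hmcast : ((k - j - i : ℕ) : ℚ) = (k:ℚ) - j - i := by
    have h1 : k - j - i = k - (j + i) := by omega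
    rw [h1, Nat.cast_sub (by omega)]
    push_cast; ring
  have hmne : ((k:ℚ) - j - i) ≠ 0 := by
    rw [← hmcast]
    have : 0 < k - j - i := by omega
    positivity
  by_cases hij : i = j
  · subst hij
    simp only [hg, if_pos (le_refl i), if_neg (by omega : ¬ i + 1 ≤ i)]
    rw [Nat.sub_self, Nat.choose_zero_right]
    have : (k:ℚ) - 2 * i = (k:ℚ) - i - i := by ring
    rw [this]
    field_simp
    simp
  · have hlt : i < j := lt_of_le_of_ne hi hij
    simp only [hg, if_pos hi, if_pos (by omega : i + 1 ≤ j)]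
    have e1 : k - j - (i+1) = (k - j - i) - 1 := by omega
    have e2 : j - (i+1) = (j - i) - 1 := by omega
    rw [e1, e2]
    set m := k - j - i with hm
    set r := j - i with hr
    have hm1 : 1 ≤ m := by omega
    have hr1 : 1 ≤ r := by omega
    have key : (m : ℚ) * (Nat.choose (m-1) (r-1) : ℚ) = (Nat.choose m r : ℚ) * r := by
      have h0 := Nat.add_one_mul_choose_eq (m-1) (r-1)
      have hm' : m - 1 + 1 = m := by omega
      have hr' : r - 1 + 1 = r := by omega
      simp only [Nat.succ_eq_add_one, hm', hr'] at h0
      exact_mod_cast congrArg (Nat.cast : ℕ → ℚ) h0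
    have hrcast : ((r : ℕ) : ℚ) = (j:ℚ) - i := by
      rw [hr, Nat.cast_sub hi]
    have hkcast : (k:ℚ) - 2 * i = (m : ℚ) + (r : ℚ) := by
      rw [hmcast, hrcast]; ring
    rw [hkcast, ← hmcast, pow_succ]
    have hmQne : (m : ℚ) ≠ 0 := by rw [hmcast]; exact hmne
    field_simp
    linear_combination (-1:ℚ) * key
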